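/- arXiv:2410.04502 — 4 statements merged into one kernel-verified Lean document; each statement's English description precedes it below -/
import Mathlib

section
/- In U = U_q(A(0,2)^{(4)})^+, for every n ≥ 1 one has the plain-commutator identities X_n·L₁² − L₁²·X_n = X_{n+2} and L₁²·Y_n − Y_n·L₁² = Y_{n+2} (these are the braided brackets [X_n, L₁²] and [L₁², Y_n], whose braiding scalars equal 1). -/
noncomputable section

namespace QAff

abbrev F : Type := FreeAlgebra ℂ (Fin 2)

def x1 : F := FreeAlgebra.ι ℂ 0
def x2 : F := FreeAlgebra.ι ℂ 1

def θ (q : ℂ) : ℂ := q - q⁻¹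

def L1F (q : ℂ) : F := x1 * x2 - q⁻¹ • (x2 * x1)

def X2F (q : ℂ) : F := x1 * L1F q - L1F q * x1

def Y2F (q : ℂ) : F := L1F q * x2 + x2 * L1F q

/-- the quantum Serre relator `[x₁,[x₁,[x₁,x₂]]]` (braided brackets w.r.t. the bicharacter
`χ((a,b),(c,d)) = (-1)^(bd) q^(ac-ad-bc+bd)`). -/
def serre1 (q : ℂ) : F := x1 * X2F q - q • (X2F q * x1)

/-- the quantum Serre relator `[[[x₁,x₂],x₂],x₂]` (braided brackets). -/
def serre2 (q : ℂ) : F := Y2F q * x2 - q • (x2 * Y2F q)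

inductive Rel (q : ℂ) : F → F → Prop
  | one : Rel q (serre1 q) 0
  | two : Rel q (serre2 q) 0

/-- `U = U_q(A(0,2)^{(4)})^+`, the free algebra on `x₁, x₂` modulo the two-sided ideal
generated by the quantum Serre relators. -/
abbrev U (q : ℂ) : Type := RingQuot (Rel q)

def π (q : ℂ) : F →ₐ[ℂ] U q := RingQuot.mkAlgHom ℂ (Rel q)

/-- `L₁ = [X₁,Y₁] = x₁x₂ - q⁻¹ x₂x₁` in `U`. -/
def L1U (q : ℂ) : U q := π q x1 * π q x2 - q⁻¹ • (π q x2 * π q x1)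

/-- real root vectors `X_n`, `n ≥ 1` (`X 0 := 0` is junk):
`X₁ = x₁`, `X_{n+1} = [X_n, L₁] = X_n L₁ - (-1)^(n-1) L₁ X_n`
(the braiding scalar is `χ((n,n-1),(1,1)) = (-1)^(n-1)`). -/
def X (q : ℂ) : ℕ → U q
  | 0 => 0
  | 1 => π q x1
  | (n+2) => X q (n+1) * L1U q - ((-1 : ℂ)^n) • (L1U q * X q (n+1))

/-- real root vectors `Y_n`, `n ≥ 1` (`Y 0 := 0` is junk):
`Y₁ = x₂`, `Y_{n+1} = [L₁, Y_n] = L₁ Y_n - (-1)^n Y_n L₁`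
(the braiding scalar is `χ((1,1),(n-1,n)) = (-1)^n`). -/
def Y (q : ℂ) : ℕ → U q
  | 0 => 0
  | 1 => π q x2
  | (n+2) => L1U q * Y q (n+1) - ((-1 : ℂ)^(n+1)) • (Y q (n+1) * L1U q)

/-- `L₀ = θ⁻¹·1`, and `L_n = [X₁, Y_n] = X₁Y_n - q⁻¹ Y_n X₁` for `n ≥ 1`
(the braiding scalar is `χ((1,0),(n-1,n)) = q⁻¹`). -/
def L (q : ℂ) : ℕ → U q
  | 0 => (θ q)⁻¹ • 1
  | (n+1) => X q 1 * Y q (n+1) - q⁻¹ • (Y q (n+1) * X q 1)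

/-- `L₀′ = θ⁻¹·1`, `L₁′ = L₁`, and
`L_n′ = [X₂, Y_{n-1}] = X₂Y_{n-1} - (-1)^(n-1) q⁻¹ Y_{n-1}X₂` for `n ≥ 2`
(the braiding scalar is `χ((2,1),(n-2,n-1)) = (-1)^(n-1) q⁻¹`). -/
def L' (q : ℂ) : ℕ → U q
  | 0 => (θ q)⁻¹ • 1
  | 1 => L q 1
  | (n+2) => X q 2 * Y q (n+1) - ((-1 : ℂ)^(n+1) * q⁻¹) • (Y q (n+1) * X q 2)

/-- `M q n` is the element `M_{2n+1}`:  `M₁ = L₁`, `M_{2n+1} = [L₂, M_{2n-1}]`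
(a plain commutator, the braiding scalar being `1`). -/
def M (q : ℂ) : ℕ → U q
  | 0 => L q 1
  | (n+1) => L q 2 * M q n - M q n * L q 2

/-- `L̃_n = (L_n + L_n′)/2`, with the convention `L̃_n = 0` for `n < 0`
(note `L̃₀ = θ⁻¹·1`). -/
def Lt (q : ℂ) (n : ℤ) : U q :=
  if 0 ≤ n then ((2 : ℂ)⁻¹) • (L q n.toNat + L' q n.toNat) else 0

/-- `L̂_{n+1} = [L_n, L₁] = L_n L₁ - (-1)^n L₁ L_n`
(the braiding scalar is `χ((n,n),(1,1)) = (-1)^n`); in particular `L̂₁ = 0`. -/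
def Lhat (q : ℂ) : ℕ → U q
  | 0 => 0
  | (n+1) => L q n * L q 1 - ((-1 : ℂ)^n) • (L q 1 * L q n)

/-- the sequence `P₀ = 1`, `P_n = q^n + q^(n-1) + (-1)^(n-1) P_(n-1)`. -/
def P (q : ℂ) : ℕ → ℂ
  | 0 => 1
  | (n+1) => q^(n+1) + q^n + (-1 : ℂ)^n * P q n

/-- the sequence `Q₀ = 1`, `Q_n = q^n - q^(n-1) + (-1)^n Q_(n-1)`. -/
def Q (q : ℂ) : ℕ → ℂ
  | 0 => 1
  | (n+1) => q^(n+1) - q^n + (-1 : ℂ)^(n+1) * Q q n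

/-- `q` is not a root of unity. -/
def NotRootOfUnity (q : ℂ) : Prop := ∀ n : ℕ, n ≠ 0 → q ^ n ≠ 1

end QAff

open QAff

section
variable {R : Type*} [Ring R] [Algebra ℂ R]
lemma auxX (A B : R) (c : ℂ) (hc : c*c=1) :
    (A*B - c•(B*A))*B + c•(B*(A*B - c•(B*A))) = A*B^2 - B^2*A := by
  simp only [mul_sub, sub_mul, smul_sub, mul_smul_comm, smul_mul_assoc, smul_smul, hc, pow_two,
    one_smul, mul_assoc]
  abel
lemma auxY (A B : R) (c : ℂ) (hc : c*c=1) :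
    B*(B*A + c•(A*B)) - c•((B*A + c•(A*B))*B) = B^2*A - A*B^2 := by
  simp only [mul_add, add_mul, smul_add, mul_smul_comm, smul_mul_assoc, smul_smul, hc, pow_two,
    one_smul, mul_assoc]
  abel
lemma auxX' (A B : R) (c : ℂ) (hc : c*c=1) :
    (A*B - c•(B*A))*B - (-c)•(B*(A*B - c•(B*A))) = A*B^2 - B^2*A := by
  rw [neg_smul, sub_neg_eq_add]; exact auxX A B c hc
lemma auxY' (A B : R) (c : ℂ) (hc : c*c=1) :
    B*(B*A - (-c)•(A*B)) - c•((B*A - (-c)•(A*B))*B) = B^2*A - A*B^2 := by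
  rw [neg_smul, sub_neg_eq_add]; exact auxY A B c hc
end

/-- In `U = U_q(A(0,2)^{(4)})^+`, for every `n ≥ 1`:
`[X_n, L₁²] = X_n L₁² - L₁² X_n = X_{n+2}` and `[L₁², Y_n] = L₁² Y_n - Y_n L₁² = Y_{n+2}`. -/
theorem stmt0 (q : ℂ) (hq0 : q ≠ 0) (hq : NotRootOfUnity q) (n : ℕ) (hn : 1 ≤ n) :
    X q n * (L q 1)^2 - (L q 1)^2 * X q n = X q (n+2) ∧
    (L q 1)^2 * Y q n - Y q n * (L q 1)^2 = Y q (n+2) := by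
  obtain ⟨m, rfl⟩ : ∃ m, n = m + 1 := ⟨n - 1, (Nat.succ_pred_eq_of_pos hn).symm⟩
  have hL : L q 1 = L1U q := rfl
  have hc : ((-1:ℂ)^m) * ((-1:ℂ)^m) = 1 := by
    rw [← mul_pow]; norm_num
  have hs : ((-1:ℂ)^(m+1)) = -((-1:ℂ)^m) := by ring
  have hs2 : ((-1:ℂ)^(m+2)) = (-1:ℂ)^m := by ring
  constructor
  · have e2 : X q (m+2) = X q (m+1) * L1U q - ((-1:ℂ)^m) • (L1U q * X q (m+1)) := rfl
    have e3 : X q (m+3) = X q (m+2) * L1U q - ((-1:ℂ)^(m+1)) • (L1U q * X q (m+2)) := rfl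
    show _ = X q (m+3)
    rw [e3, e2, hL, hs]
    exact (auxX' _ _ _ hc).symm
  · have e2 : Y q (m+2) = L1U q * Y q (m+1) - ((-1:ℂ)^(m+1)) • (Y q (m+1) * L1U q) := rfl
    have e3 : Y q (m+3) = L1U q * Y q (m+2) - ((-1:ℂ)^(m+2)) • (Y q (m+2) * L1U q) := rfl
    show _ = Y q (m+3)
    rw [e3, e2, hL, hs, hs2]
    exact (auxY' _ _ _ hc).symm
end
end

section
/- In U = U_q(A(0,2)^{(4)})^+, for every n ≥ 1 one has L′_{2n+1} = L_{2n+1} + [L_{2n}, L₁] and L′_{2n+2} = L_{2n+2} − [L_{2n+1}, L₁], where [L_{2n}, L₁] = L_{2n}L₁ − L₁L_{2n} (braiding scalar 1) and [L_{2n+1}, L₁] = L_{2n+1}L₁ + L₁L_{2n+1} (braiding scalar −1). -/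
noncomputable section

open QAff

lemma L1_eq (q : ℂ) : L q 1 = L1U q := by
  show X q 1 * Y q 1 - q⁻¹ • (Y q 1 * X q 1) = _
  rfl

lemma key (q : ℂ) (n : ℕ) :
    L' q (n+2) = L q (n+2) + ((-1:ℂ)^(n+1)) • (L q (n+1) * L q 1) - L q 1 * L q (n+1) := by
  have hX2 : X q 2 = X q 1 * L1U q - ((-1:ℂ)^0) • (L1U q * X q 1) := rfl
  have hY : Y q (n+2) = L1U q * Y q (n+1) - ((-1:ℂ)^(n+1)) • (Y q (n+1) * L1U q) := rfl
  have hL2 : L q (n+2) = X q 1 * Y q (n+2) - q⁻¹ • (Y q (n+2) * X q 1) := rfl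
  have hL1 : L q (n+1) = X q 1 * Y q (n+1) - q⁻¹ • (Y q (n+1) * X q 1) := rfl
  have hL' : L' q (n+2)
      = X q 2 * Y q (n+1) - ((-1:ℂ)^(n+1) * q⁻¹) • (Y q (n+1) * X q 2) := rfl
  rw [L1_eq, hL', hX2, hL2, hY, hL1, pow_zero, one_smul]
  simp only [mul_sub, sub_mul, smul_sub, smul_mul_assoc, mul_smul_comm, smul_smul, mul_assoc]
  module

/-- In `U = U_q(A(0,2)^{(4)})^+`, for every `n ≥ 1`:
`L′_{2n+1} = L_{2n+1} + [L_{2n}, L₁]` and `L′_{2n+2} = L_{2n+2} - [L_{2n+1}, L₁]`,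
where `[L_{2n}, L₁] = L_{2n}L₁ - L₁L_{2n}` and `[L_{2n+1}, L₁] = L_{2n+1}L₁ + L₁L_{2n+1}`. -/
theorem stmt1 (q : ℂ) (hq0 : q ≠ 0) (hq : NotRootOfUnity q) (n : ℕ) (hn : 1 ≤ n) :
    L' q (2*n+1) = L q (2*n+1) + (L q (2*n) * L q 1 - L q 1 * L q (2*n)) ∧
    L' q (2*n+2) = L q (2*n+2) - (L q (2*n+1) * L q 1 + L q 1 * L q (2*n+1)) := by
  obtain ⟨m, rfl⟩ : ∃ m, n = m + 1 := ⟨n - 1, by omega⟩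
  constructor
  · have e1 : 2*(m+1)+1 = (2*m+1)+2 := by ring
    have e2 : 2*(m+1) = (2*m+1)+1 := by ring
    rw [e1, e2, key]
    have h : ((-1:ℂ))^(2*m+1+1) = 1 := Even.neg_one_pow ⟨m+1, by ring⟩
    rw [h, one_smul]
    abel
  · have e3 : 2*(m+1)+2 = (2*m+2)+2 := by ring
    have e4 : 2*(m+1)+1 = (2*m+2)+1 := by ring
    rw [e3, e4, key]
    have h : ((-1:ℂ))^(2*m+2+1) = -1 := Odd.neg_one_pow ⟨m+1, by ring⟩
    rw [h]
    module
end
end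

section
/- In U = U_q(A(0,2)^{(4)})^+, for every n ≥ 1: [M_{2n+1}, M_{2n−1}] = [L₂, M_{2n−1}²], where [M_{2n+1}, M_{2n−1}] = M_{2n+1}M_{2n−1} + M_{2n−1}M_{2n+1} (braiding scalar −1) and [L₂, M_{2n−1}²] = L₂M_{2n−1}² − M_{2n−1}²L₂ (braiding scalar 1). Moreover, if [L₂, M_{2n−1}²] = 0 then [M_{2n+3}, M_{2n−1}] = M_{2n+3}M_{2n−1} + M_{2n−1}M_{2n+3} = −2·M_{2n+1}². -/
noncomputable section

open QAff

private lemma aux_ring1 {R : Type*} [Ring R] (A B : R) :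
    (A*B - B*A)*B + B*(A*B - B*A) = A*(B*B) - (B*B)*A := by
  noncomm_ring

private lemma aux_ring2 {R : Type*} [Ring R] (A B : R) :
    ((A*(A*B-B*A)-(A*B-B*A)*A)*B + B*(A*(A*B-B*A)-(A*B-B*A)*A))
      - (-(((A*B-B*A)*(A*B-B*A)) + ((A*B-B*A)*(A*B-B*A))))
      = A*A*(B*B) + (B*B)*(A*A) - (A*(B*B)*A + A*(B*B)*A) := by
  noncomm_ring

/-- In `U = U_q(A(0,2)^{(4)})^+`, for every `n ≥ 1` (here stated for all `n ≥ 0` after the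
reindexing `n ↦ n+1`, with `M q k = M_{2k+1}`):
`[M_{2n+1}, M_{2n-1}] = M_{2n+1}M_{2n-1} + M_{2n-1}M_{2n+1} = [L₂, M_{2n-1}²]
 = L₂M_{2n-1}² - M_{2n-1}²L₂`, and if `[L₂, M_{2n-1}²] = 0` then
`[M_{2n+3}, M_{2n-1}] = M_{2n+3}M_{2n-1} + M_{2n-1}M_{2n+3} = -2·M_{2n+1}²`. -/
theorem stmt3 (q : ℂ) (hq0 : q ≠ 0) (hq : NotRootOfUnity q) (n : ℕ) :
    (M q (n+1) * M q n + M q n * M q (n+1) = L q 2 * (M q n)^2 - (M q n)^2 * L q 2) ∧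
    (L q 2 * (M q n)^2 - (M q n)^2 * L q 2 = 0 →
      M q (n+2) * M q n + M q n * M q (n+2) = (-2 : ℂ) • (M q (n+1))^2) := by
  set A := L q 2
  set B := M q n with hB
  have hM1 : M q (n+1) = A * B - B * A := rfl
  have hM2 : M q (n+2) = A * (A * B - B * A) - (A * B - B * A) * A := by
    rw [show M q (n+2) = A * M q (n+1) - M q (n+1) * A from rfl, hM1]
  constructor
  · rw [hM1, pow_two, aux_ring1]
  · intro h
    have h' : A * (B * B) = (B * B) * A := by
      have h2 := sub_eq_zero.mp h
      simpa [pow_two] using h2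
    have e1 : A * A * (B * B) = A * (B * B) * A := by
      conv_lhs => rw [mul_assoc, h']
      rw [← mul_assoc]
    have e2 : (B * B) * (A * A) = A * (B * B) * A := by
      conv_lhs => rw [← mul_assoc, ← h']
    have hs : (-2 : ℂ) • (M q (n+1))^2 = -((M q (n+1))^2 + (M q (n+1))^2) := by module
    rw [← sub_eq_zero, hs, hM2, hM1, pow_two, aux_ring2, e1, e2, sub_self]
end
end

section
/- In U = U_q(A(0,2)^{(4)})^+ the following identities hold (all four brackets are plain commutators, the braiding scalars being 1): [X₁, L₂] = (q+2)X₃ − θ·L₁X₂; [X₁, L₂′] = q·X₃ − θ·L₁X₂; [L₂, Y₁] = q·Y₃ + θ·Y₂L₁; [L₂′, Y₁] = (q−2)Y₃ + θ·Y₂L₁. -/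
noncomputable section

namespace QAff

def X3F (q : ℂ) : F := X2F q * L1F q + L1F q * X2F q
def Y3F (q : ℂ) : F := L1F q * Y2F q - Y2F q * L1F q
def L2F (q : ℂ) : F := x1 * Y2F q - q⁻¹ • (Y2F q * x1)
def Lp2F (q : ℂ) : F := X2F q * x2 + q⁻¹ • (x2 * X2F q)

set_option maxHeartbeats 4000000 in
lemma key1 (q : ℂ) (hq0 : q ≠ 0) :
    x1 * L2F q - L2F q * x1 =
      (q + 2) • X3F q - θ q • (L1F q * X2F q)
        + (serre1 q * x2 + (q^2)⁻¹ • (x2 * serre1 q)) := by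
  simp only [L2F, X3F, serre1, X2F, Y2F, L1F, θ, mul_sub, sub_mul, mul_add, add_mul,
    smul_mul_assoc, mul_smul_comm, smul_sub, smul_add, smul_smul, mul_assoc, sub_smul, add_smul]
  match_scalars
  all_goals ring_nf
  all_goals try field_simp
  all_goals try ring

set_option maxHeartbeats 4000000 in
lemma key2 (q : ℂ) (hq0 : q ≠ 0) :
    x1 * Lp2F q - Lp2F q * x1 =
      q • X3F q - θ q • (L1F q * X2F q)
        + (serre1 q * x2 + (q^2)⁻¹ • (x2 * serre1 q)) := by
  simp only [Lp2F, X3F, serre1, X2F, Y2F, L1F, θ, mul_sub, sub_mul, mul_add, add_mul,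
    smul_mul_assoc, mul_smul_comm, smul_sub, smul_add, smul_smul, mul_assoc, sub_smul, add_smul]
  match_scalars
  all_goals ring_nf
  all_goals try field_simp
  all_goals try ring

set_option maxHeartbeats 4000000 in
lemma key3 (q : ℂ) (hq0 : q ≠ 0) :
    L2F q * x2 - x2 * L2F q =
      q • Y3F q + θ q • (Y2F q * L1F q)
        + (x1 * serre2 q - (q^2)⁻¹ • (serre2 q * x1)) := by
  simp only [L2F, Y3F, serre2, X2F, Y2F, L1F, θ, mul_sub, sub_mul, mul_add, add_mul,
    smul_mul_assoc, mul_smul_comm, smul_sub, smul_add, smul_smul, mul_assoc, sub_smul, add_smul]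
  match_scalars
  all_goals ring_nf
  all_goals try field_simp
  all_goals try ring

set_option maxHeartbeats 4000000 in
lemma key4 (q : ℂ) (hq0 : q ≠ 0) :
    Lp2F q * x2 - x2 * Lp2F q =
      (q - 2) • Y3F q + θ q • (Y2F q * L1F q)
        + (x1 * serre2 q - (q^2)⁻¹ • (serre2 q * x1)) := by
  simp only [Lp2F, Y3F, serre2, X2F, Y2F, L1F, θ, mul_sub, sub_mul, mul_add, add_mul,
    smul_mul_assoc, mul_smul_comm, smul_sub, smul_add, smul_smul, mul_assoc, sub_smul, add_smul]
  match_scalars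
  all_goals ring_nf
  all_goals try field_simp
  all_goals try ring

lemma pis1 (q : ℂ) : π q (serre1 q) = 0 := by
  have h := RingQuot.mkAlgHom_rel ℂ (Rel.one (q := q))
  simpa [π] using h

lemma pis2 (q : ℂ) : π q (serre2 q) = 0 := by
  have h := RingQuot.mkAlgHom_rel ℂ (Rel.two (q := q))
  simpa [π] using h

lemma hL1 (q : ℂ) : L1U q = π q (L1F q) := by
  simp [L1U, L1F]

lemma hX1 (q : ℂ) : X q 1 = π q x1 := rfl
lemma hY1 (q : ℂ) : Y q 1 = π q x2 := rfl

lemma hX2 (q : ℂ) : X q 2 = π q (X2F q) := by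
  have h : X q 2 = X q 1 * L1U q - ((-1 : ℂ)^0) • (L1U q * X q 1) := rfl
  rw [h, hX1, hL1]
  simp [X2F]

lemma hY2 (q : ℂ) : Y q 2 = π q (Y2F q) := by
  have h : Y q 2 = L1U q * Y q 1 - ((-1 : ℂ)^1) • (Y q 1 * L1U q) := rfl
  rw [h, hY1, hL1]
  simp only [← map_mul, ← map_smul, ← map_sub]
  congr 1
  simp [Y2F, sub_neg_eq_add]

lemma hX3 (q : ℂ) : X q 3 = π q (X3F q) := by
  have h : X q 3 = X q 2 * L1U q - ((-1 : ℂ)^1) • (L1U q * X q 2) := rfl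
  rw [h, hX2, hL1]
  simp only [← map_mul, ← map_smul, ← map_sub]
  congr 1
  simp [X3F, sub_neg_eq_add]

lemma hY3 (q : ℂ) : Y q 3 = π q (Y3F q) := by
  have h : Y q 3 = L1U q * Y q 2 - ((-1 : ℂ)^2) • (Y q 2 * L1U q) := rfl
  rw [h, hY2, hL1]
  simp [Y3F]

lemma hLq1 (q : ℂ) : L q 1 = π q (L1F q) := by
  have h : L q 1 = X q 1 * Y q 1 - q⁻¹ • (Y q 1 * X q 1) := rfl
  rw [h, hX1, hY1]
  simp [L1F]

lemma hLq2 (q : ℂ) : L q 2 = π q (L2F q) := by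
  have h : L q 2 = X q 1 * Y q 2 - q⁻¹ • (Y q 2 * X q 1) := rfl
  rw [h, hX1, hY2]
  simp [L2F]

lemma hLp2 (q : ℂ) : L' q 2 = π q (Lp2F q) := by
  have h : L' q 2 = X q 2 * Y q 1 - ((-1 : ℂ)^1 * q⁻¹) • (Y q 1 * X q 2) := rfl
  rw [h, hY1, hX2]
  simp only [← map_mul, ← map_smul, ← map_sub]
  congr 1
  simp [Lp2F, sub_neg_eq_add]

end QAff


open QAff

/-- In `U = U_q(A(0,2)^{(4)})^+`:
`[X₁, L₂] = (q+2)X₃ - θL₁X₂`, `[X₁, L₂′] = qX₃ - θL₁X₂`,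
`[L₂, Y₁] = qY₃ + θY₂L₁`, `[L₂′, Y₁] = (q-2)Y₃ + θY₂L₁` (all plain commutators). -/
theorem stmt4 (q : ℂ) (hq0 : q ≠ 0) (hq : NotRootOfUnity q) :
    (X q 1 * L q 2 - L q 2 * X q 1 = (q + 2) • X q 3 - θ q • (L q 1 * X q 2)) ∧
    (X q 1 * L' q 2 - L' q 2 * X q 1 = q • X q 3 - θ q • (L q 1 * X q 2)) ∧
    (L q 2 * Y q 1 - Y q 1 * L q 2 = q • Y q 3 + θ q • (Y q 2 * L q 1)) ∧
    (L' q 2 * Y q 1 - Y q 1 * L' q 2 = (q - 2) • Y q 3 + θ q • (Y q 2 * L q 1)) := by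
  have m1 := congrArg (π q) (key1 q hq0)
  have m2 := congrArg (π q) (key2 q hq0)
  have m3 := congrArg (π q) (key3 q hq0)
  have m4 := congrArg (π q) (key4 q hq0)
  simp only [map_sub, map_add, map_mul, map_smul, pis1, pis2, mul_zero, zero_mul,
    smul_zero, add_zero, sub_zero, zero_sub, zero_add, neg_zero] at m1 m2 m3 m4
  refine ⟨?_, ?_, ?_, ?_⟩
  · rw [hX1, hLq2, hX3, hLq1, hX2]; exact m1
  · rw [hX1, hLp2, hX3, hLq1, hX2]; exact m2
  · rw [hY1, hLq2, hY3, hY2, hLq1]; exact m3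
  · rw [hY1, hLp2, hY3, hY2, hLq1]; exact m4
end
end
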